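/- Let L be a semiexact reflection on a triangulated category T and let C be the associated semiexact coreflection (so CX → X → LX → ΣCX is a distinguished triangle for every X), with 𝓒 the class of C-colocal objects and 𝓛 the class of L-local objects. Then L is exact if and only if C is exact, and in that case 𝓒 = ^⊥𝓛 and 𝓛 = 𝓒^⊥. -/

import Mathlib

open CategoryTheory Category Limits Pretriangulated

universe v u

namespace Paper

section General

variable {T : Type u} [Category.{v} T]

/-- A full subcategory (given by its class of objects) is closed under retracts. -/
def ClosedUnderRetracts (S : Set T) : Prop :=
  ∀ ⦃A B : T⦄, A ∈ S → (∃ (i : B ⟶ A) (r : A ⟶ B), i ≫ r = 𝟙 B) → B ∈ S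

/-- A full subcategory is weakly reflective: every object admits a weak reflection into it. -/
def WeaklyReflective (S : Set T) : Prop :=
  ∀ X : T, ∃ (X' : T) (l : X ⟶ X'), X' ∈ S ∧
    ∀ ⦃Y : T⦄, Y ∈ S → ∀ f : X ⟶ Y, ∃ g : X' ⟶ Y, l ≫ g = f

/-- A full subcategory is weakly coreflective. -/
def WeaklyCoreflective (S : Set T) : Prop :=
  ∀ X : T, ∃ (X' : T) (c : X' ⟶ X), X' ∈ S ∧
    ∀ ⦃Y : T⦄, Y ∈ S → ∀ f : Y ⟶ X, ∃ g : Y ⟶ X', g ≫ c = f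

/-- A full subcategory is reflective: the inclusion has a left adjoint. -/
def ReflectiveSet (S : Set T) : Prop :=
  (ObjectProperty.ι (fun X => X ∈ S : ObjectProperty T)).IsRightAdjoint

/-- A full subcategory is coreflective: the inclusion has a right adjoint. -/
def CoreflectiveSet (S : Set T) : Prop :=
  (ObjectProperty.ι (fun X => X ∈ S : ObjectProperty T)).IsLeftAdjoint

end General

/-- The data of an endofunctor together with a natural transformation from the identity
(a candidate reflection with its unit). -/
structure ReflectionData (T : Type u) [Category.{v} T] where
  L : T ⥤ T
  unit : 𝟭 T ⟶ L

/-- The data of an endofunctor together with a natural transformation to the identity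
(a candidate coreflection with its counit). -/
structure CoreflectionData (T : Type u) [Category.{v} T] where
  C : T ⥤ T
  counit : C ⟶ 𝟭 T

section ReflData

variable {T : Type u} [Category.{v} T]

/-- The `L`-local objects: the essential image of `L`. -/
def ReflectionData.localObjects (R : ReflectionData T) : Set T := R.L.essImage

/-- `(L, l)` is a reflection: every morphism to an `L`-local object factors uniquely
through the unit. -/
def ReflectionData.IsReflection (R : ReflectionData T) : Prop :=
  ∀ ⦃X W : T⦄, W ∈ R.localObjects → ∀ f : X ⟶ W,
    ∃! g : R.L.obj X ⟶ W, R.unit.app X ≫ g = f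

/-- The `C`-colocal objects: the essential image of `C`. -/
def CoreflectionData.colocalObjects (Q : CoreflectionData T) : Set T := Q.C.essImage

/-- `(C, c)` is a coreflection: every morphism from a `C`-colocal object factors uniquely
through the counit. -/
def CoreflectionData.IsCoreflection (Q : CoreflectionData T) : Prop :=
  ∀ ⦃X W : T⦄, W ∈ Q.colocalObjects → ∀ f : W ⟶ X,
    ∃! g : W ⟶ Q.C.obj X, g ≫ Q.counit.app X = f

end ReflData

section Triangulated

variable {T : Type u} [Category.{v} T] [HasZeroObject T] [Preadditive T] [HasShift T ℤ]
  [∀ n : ℤ, (shiftFunctor T n).Additive] [Pretriangulated T]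

/-- Closed under fibres: the first vertex of a distinguished triangle whose second and third
vertices lie in `S` lies in `S`. -/
def ClosedUnderFibres (S : Set T) : Prop :=
  ∀ ⦃X Y Z : T⦄ (u : X ⟶ Y) (v : Y ⟶ Z) (w : Z ⟶ X⟦(1:ℤ)⟧),
    (Triangle.mk u v w ∈ distTriang T) → Y ∈ S → Z ∈ S → X ∈ S

/-- Closed under cofibres. -/
def ClosedUnderCofibres (S : Set T) : Prop :=
  ∀ ⦃X Y Z : T⦄ (u : X ⟶ Y) (v : Y ⟶ Z) (w : Z ⟶ X⟦(1:ℤ)⟧),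
    (Triangle.mk u v w ∈ distTriang T) → X ∈ S → Y ∈ S → Z ∈ S

/-- Closed under extensions. -/
def ClosedUnderExtensions (S : Set T) : Prop :=
  ∀ ⦃X Y Z : T⦄ (u : X ⟶ Y) (v : Y ⟶ Z) (w : Z ⟶ X⟦(1:ℤ)⟧),
    (Triangle.mk u v w ∈ distTriang T) → X ∈ S → Z ∈ S → Y ∈ S

/-- `^⊥D`: objects `X` with `T(X, ΣᵏD) = 0` for all `D ∈ D` and all integers `k`. -/
def leftOrth (D : Set T) : Set T :=
  {X | ∀ ⦃E : T⦄, E ∈ D → ∀ k : ℤ, ∀ f : X ⟶ E⟦k⟧, f = 0}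

/-- `D^⊥`: objects `Y` with `T(ΣᵏD, Y) = 0` for all `D ∈ D` and all integers `k`. -/
def rightOrth (D : Set T) : Set T :=
  {Y | ∀ ⦃E : T⦄, E ∈ D → ∀ k : ℤ, ∀ f : E⟦k⟧ ⟶ Y, f = 0}

/-- `⊾D`: objects `X` with `T(X, ΣᵏD) = 0` for all `D ∈ D` and all `k ≤ 0`. -/
def leftSemiOrth (D : Set T) : Set T :=
  {X | ∀ ⦃E : T⦄, E ∈ D → ∀ k : ℤ, k ≤ 0 → ∀ f : X ⟶ E⟦k⟧, f = 0}

/-- `D⊿`: objects `Y` with `T(ΣᵏD, Y) = 0` for all `D ∈ D` and all `k ≥ 0`. -/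
def rightSemiOrth (D : Set T) : Set T :=
  {Y | ∀ ⦃E : T⦄, E ∈ D → ∀ k : ℤ, 0 ≤ k → ∀ f : E⟦k⟧ ⟶ Y, f = 0}

section WithLimits

variable [HasProducts.{v} T] [HasCoproducts.{v} T]

/-- Closed under all (small) products. -/
def ClosedUnderProducts (S : Set T) : Prop :=
  ∀ ⦃ι : Type v⦄ (f : ι → T), (∀ i, f i ∈ S) → (∏ᶜ f) ∈ S

/-- Closed under all (small) coproducts. -/
def ClosedUnderCoproducts (S : Set T) : Prop :=
  ∀ ⦃ι : Type v⦄ (f : ι → T), (∀ i, f i ∈ S) → (∐ f) ∈ S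

/-- Semilocalizing: closed under coproducts, cofibres and extensions. -/
def IsSemilocalizing (S : Set T) : Prop :=
  ClosedUnderCoproducts S ∧ ClosedUnderCofibres S ∧ ClosedUnderExtensions S

/-- Semicolocalizing: closed under products, fibres and extensions. -/
def IsSemicolocalizing (S : Set T) : Prop :=
  ClosedUnderProducts S ∧ ClosedUnderFibres S ∧ ClosedUnderExtensions S

/-- Localizing: closed under coproducts, fibres, cofibres and extensions. -/
def IsLocalizing (S : Set T) : Prop :=
  ClosedUnderCoproducts S ∧ ClosedUnderFibres S ∧ ClosedUnderCofibres S ∧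
    ClosedUnderExtensions S

/-- Colocalizing: closed under products, fibres, cofibres and extensions. -/
def IsColocalizing (S : Set T) : Prop :=
  ClosedUnderProducts S ∧ ClosedUnderFibres S ∧ ClosedUnderCofibres S ∧
    ClosedUnderExtensions S

/-- The smallest semilocalizing subcategory containing `D`. -/
def semiloc (D : Set T) : Set T := ⋂₀ {S : Set T | IsSemilocalizing S ∧ D ⊆ S}

/-- The smallest semicolocalizing subcategory containing `D`. -/
def semicoloc (D : Set T) : Set T := ⋂₀ {S : Set T | IsSemicolocalizing S ∧ D ⊆ S}

/-- The smallest localizing subcategory containing `D`. -/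
def loc (D : Set T) : Set T := ⋂₀ {S : Set T | IsLocalizing S ∧ D ⊆ S}

/-- The smallest colocalizing subcategory containing `D`. -/
def coloc (D : Set T) : Set T := ⋂₀ {S : Set T | IsColocalizing S ∧ D ⊆ S}

end WithLimits

end Triangulated


section Statements

variable {T : Type u} [Category.{v} T] [HasZeroObject T] [Preadditive T] [HasShift T ℤ]
  [∀ n : ℤ, (shiftFunctor T n).Additive] [Pretriangulated T]
  [HasProducts.{v} T] [HasCoproducts.{v} T]

open ZeroObject

lemma aux_shift_hom_zero_left {Z E : T} (hZ : ∀ k : ℤ, ∀ f : Z ⟶ E⟦k⟧, f = 0)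
    (m k : ℤ) (g : Z⟦m⟧ ⟶ E⟦k⟧) : g = 0 := by
  apply (shiftFunctor T (-m)).map_injective
  rw [Functor.map_zero]
  have h0 : ((shiftFunctorCompIsoId T m (-m) (by ring)).inv.app Z ≫
      (shiftFunctor T (-m)).map g ≫ (shiftFunctorAdd' T k (-m) (k - m) (by ring)).inv.app E)
      = 0 := hZ (k - m) _
  calc (shiftFunctor T (-m)).map g
      = (shiftFunctorCompIsoId T m (-m) (by ring)).hom.app Z ≫
        ((shiftFunctorCompIsoId T m (-m) (by ring)).inv.app Z ≫ (shiftFunctor T (-m)).map g ≫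
          (shiftFunctorAdd' T k (-m) (k - m) (by ring)).inv.app E) ≫
        (shiftFunctorAdd' T k (-m) (k - m) (by ring)).hom.app E := by simp
    _ = 0 := by rw [h0]; simp

lemma aux_shift_hom_zero_right {E Z : T} (hZ : ∀ k : ℤ, ∀ f : E⟦k⟧ ⟶ Z, f = 0)
    (m k : ℤ) (g : E⟦k⟧ ⟶ Z⟦m⟧) : g = 0 := by
  apply (shiftFunctor T (-m)).map_injective
  rw [Functor.map_zero]
  have h0 : ((shiftFunctorAdd' T k (-m) (k - m) (by ring)).hom.app E ≫
      (shiftFunctor T (-m)).map g ≫ (shiftFunctorCompIsoId T m (-m) (by ring)).hom.app Z)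
      = 0 := hZ (k - m) _
  calc (shiftFunctor T (-m)).map g
      = (shiftFunctorAdd' T k (-m) (k - m) (by ring)).inv.app E ≫
        ((shiftFunctorAdd' T k (-m) (k - m) (by ring)).hom.app E ≫
          (shiftFunctor T (-m)).map g ≫
          (shiftFunctorCompIsoId T m (-m) (by ring)).hom.app Z) ≫
        (shiftFunctorCompIsoId T m (-m) (by ring)).inv.app Z := by simp
    _ = 0 := by rw [h0]; simp

lemma aux_shift_mem {S : Set T} (hiso : ∀ ⦃A B : T⦄, (A ≅ B) → A ∈ S → B ∈ S)
    (h0 : (0 : T) ∈ S) (hfib : ClosedUnderFibres S) (hcof : ClosedUnderCofibres S)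
    {X : T} (hX : X ∈ S) : ∀ k : ℤ, X⟦k⟧ ∈ S := by
  have hup : ∀ ⦃Y : T⦄, Y ∈ S → Y⟦(1:ℤ)⟧ ∈ S := by
    intro Y hY
    exact hcof _ _ _ (rot_of_distTriang _ (contractible_distinguished Y)) hY h0
  have hdown : ∀ ⦃Y : T⦄, Y ∈ S → Y⟦(-1:ℤ)⟧ ∈ S := by
    intro Y hY
    have h3 : (Y⟦(-1:ℤ)⟧)⟦(1:ℤ)⟧ ∈ S :=
      hiso ((shiftFunctorCompIsoId T (-1 : ℤ) 1 (by ring)).app Y).symm hY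
    exact hfib _ _ _ (rot_of_distTriang _ (contractible_distinguished (Y⟦(-1:ℤ)⟧))) h0 h3
  intro k
  induction k using Int.induction_on with
  | zero => exact hiso ((shiftFunctorZero T ℤ).app X).symm hX
  | succ n hn => exact hiso ((shiftFunctorAdd' T (n:ℤ) 1 (n+1) rfl).symm.app X) (hup hn)
  | pred n hn =>
      exact hiso ((shiftFunctorAdd' T (-n:ℤ) (-1) (-n-1) (by ring)).symm.app X) (hdown hn)

lemma aux_colocal_of_split {Q : CoreflectionData T} (hcorefl : Q.IsCoreflection)
    {X : T} (s : X ⟶ Q.C.obj X) (hs : s ≫ Q.counit.app X = 𝟙 X) : X ∈ Q.colocalObjects := by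
  have hCX : Q.C.obj X ∈ Q.colocalObjects := ⟨X, ⟨Iso.refl _⟩⟩
  obtain ⟨g, -, huniq⟩ := hcorefl hCX (Q.counit.app X)
  have e1 := huniq (Q.counit.app X ≫ s)
    (by show (Q.counit.app X ≫ s) ≫ Q.counit.app X = Q.counit.app X; rw [assoc, hs]; simp)
  have e2 := huniq (𝟙 (Q.C.obj X))
    (by show 𝟙 (Q.C.obj X) ≫ Q.counit.app X = Q.counit.app X; simp)
  have h2 : Q.counit.app X ≫ s = 𝟙 (Q.C.obj X) := e1.trans e2.symm
  exact ⟨X, ⟨⟨Q.counit.app X, s, h2, hs⟩⟩⟩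

lemma aux_local_of_split {R : ReflectionData T} (hrefl : R.IsReflection)
    {X : T} (g : R.L.obj X ⟶ X) (hg : R.unit.app X ≫ g = 𝟙 X) : X ∈ R.localObjects := by
  have hLX : R.L.obj X ∈ R.localObjects := ⟨X, ⟨Iso.refl _⟩⟩
  obtain ⟨g', -, huniq⟩ := hrefl hLX (R.unit.app X)
  have e1 := huniq (g ≫ R.unit.app X)
    (by show R.unit.app X ≫ g ≫ R.unit.app X = R.unit.app X; rw [← assoc, hg]; simp)
  have e2 := huniq (𝟙 (R.L.obj X))
    (by show R.unit.app X ≫ 𝟙 (R.L.obj X) = R.unit.app X; simp)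
  have h2 : g ≫ R.unit.app X = 𝟙 (R.L.obj X) := e1.trans e2.symm
  exact ⟨X, ⟨⟨g, R.unit.app X, h2, hg⟩⟩⟩

lemma aux_counit_split {Q : CoreflectionData T} (hcorefl : Q.IsCoreflection)
    {W : T} (hW : W ∈ Q.colocalObjects) :
    ∃ s : W ⟶ Q.C.obj W, s ≫ Q.counit.app W = 𝟙 W := by
  obtain ⟨s, hs, -⟩ := hcorefl hW (𝟙 W)
  exact ⟨s, hs⟩

lemma aux_hom_zero {R : ReflectionData T} {Q : CoreflectionData T}
    (hrefl : R.IsReflection) (hcorefl : Q.IsCoreflection)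
    (htri : ∀ X : T, ∃ w : R.L.obj X ⟶ (Q.C.obj X)⟦(1:ℤ)⟧,
        Triangle.mk (Q.counit.app X) (R.unit.app X) w ∈ distTriang T)
    {W Y : T} (hW : W ∈ Q.colocalObjects) (hY : Y ∈ R.localObjects) (f : W ⟶ Y) :
    f = 0 := by
  obtain ⟨g, hg, -⟩ := hrefl hY f
  obtain ⟨s, hs⟩ := aux_counit_split hcorefl hW
  obtain ⟨w, hw⟩ := htri W
  have h12 : Q.counit.app W ≫ R.unit.app W = 0 := comp_distTriang_mor_zero₁₂ _ hw
  have hunit : R.unit.app W = 0 := by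
    have h3 : s ≫ Q.counit.app W ≫ R.unit.app W = 0 := by rw [h12, comp_zero]
    rw [← assoc, hs, id_comp] at h3
    exact h3
  rw [← hg, hunit, zero_comp]

lemma aux_leftOrth_fibres (D : Set T) : ClosedUnderFibres (leftOrth D) := by
  intro X Y Z u v w hT hY hZ E hE k f
  obtain ⟨g, hg⟩ := Triangle.yoneda_exact₂ _ (inv_rot_of_distTriang _ hT) f
    (aux_shift_hom_zero_left (fun k' f' => hZ hE k' f') (-1) k _)
  rw [hg, hY hE k g]; exact comp_zero

lemma aux_rightOrth_cofibres (D : Set T) : ClosedUnderCofibres (rightOrth D) := by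
  intro X Y Z u v w hT hX hY E hE k f
  obtain ⟨g, hg⟩ := Triangle.coyoneda_exact₂ _ (rot_of_distTriang _ hT) f
    (aux_shift_hom_zero_right (fun k' f' => hX hE k' f') 1 k _)
  rw [hg, hY hE k g]; exact zero_comp

lemma aux_zero_local {R : ReflectionData T} (hrefl : R.IsReflection) :
    (0:T) ∈ R.localObjects :=
  aux_local_of_split hrefl 0 (by rw [comp_zero, Limits.id_zero])


lemma aux_zero_colocal {Q : CoreflectionData T} (hcorefl : Q.IsCoreflection) :
    (0:T) ∈ Q.colocalObjects :=
  aux_colocal_of_split hcorefl 0 (by rw [zero_comp, Limits.id_zero])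

/-- If `L` is a semiexact reflection and `C` the associated semiexact coreflection
(so that `CX → X → LX → ΣCX` is distinguished for every `X`), then `L` is exact if and only if
`C` is exact, and in that case `𝓒 = ^⊥𝓛` and `𝓛 = 𝓒^⊥`. -/
theorem statement6 (R : ReflectionData T) (Q : CoreflectionData T)
    (hrefl : R.IsReflection) (hsemi : IsSemicolocalizing R.localObjects)
    (hcorefl : Q.IsCoreflection) (hsemi' : IsSemilocalizing Q.colocalObjects)
    (htri : ∀ X : T, ∃ w : R.L.obj X ⟶ (Q.C.obj X)⟦(1:ℤ)⟧,
        Triangle.mk (Q.counit.app X) (R.unit.app X) w ∈ distTriang T) :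
    (IsColocalizing R.localObjects ↔ IsLocalizing Q.colocalObjects) ∧
    (IsColocalizing R.localObjects →
      Q.colocalObjects = leftOrth R.localObjects ∧
      R.localObjects = rightOrth Q.colocalObjects) := by
  have hisoL : ∀ ⦃A B : T⦄, (A ≅ B) → A ∈ R.localObjects → B ∈ R.localObjects :=
    fun _ _ e h => Functor.essImage.ofIso e h
  have hisoC : ∀ ⦃A B : T⦄, (A ≅ B) → A ∈ Q.colocalObjects → B ∈ Q.colocalObjects :=
    fun _ _ e h => Functor.essImage.ofIso e h
  have keyC : IsColocalizing R.localObjects →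
      Q.colocalObjects = leftOrth R.localObjects := by
    intro hcoL
    have hshift : ∀ {Y : T}, Y ∈ R.localObjects → ∀ k : ℤ, Y⟦k⟧ ∈ R.localObjects :=
      fun hY => aux_shift_mem hisoL (aux_zero_local hrefl) hcoL.2.1 hcoL.2.2.1 hY
    apply Set.Subset.antisymm
    · intro W hW E hE k f
      exact aux_hom_zero hrefl hcorefl htri hW (hshift hE k) f
    · intro X hX
      obtain ⟨w, hw⟩ := htri X
      have hL : R.L.obj X ∈ R.localObjects := ⟨X, ⟨Iso.refl _⟩⟩
      have hunit : R.unit.app X = 0 := by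
        have h0 : (R.unit.app X ≫ (shiftFunctorZero T ℤ).inv.app (R.L.obj X)) = 0 :=
          hX hL 0 _
        have := congrArg (· ≫ (shiftFunctorZero T ℤ).hom.app (R.L.obj X)) h0
        simpa using this
      obtain ⟨s, hs⟩ := Triangle.coyoneda_exact₂ _ hw (𝟙 X)
        (by show 𝟙 X ≫ R.unit.app X = 0; rw [hunit]; simp)
      exact aux_colocal_of_split hcorefl s hs.symm
  have keyL : IsLocalizing Q.colocalObjects →
      R.localObjects = rightOrth Q.colocalObjects := by
    intro hL
    have hshift : ∀ {W : T}, W ∈ Q.colocalObjects → ∀ k : ℤ, W⟦k⟧ ∈ Q.colocalObjects :=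
      fun hW => aux_shift_mem hisoC (aux_zero_colocal hcorefl) hL.2.1 hL.2.2.1 hW
    apply Set.Subset.antisymm
    · intro Y hY W hW k f
      exact aux_hom_zero hrefl hcorefl htri (hshift hW k) hY f
    · intro Y hY
      obtain ⟨w, hw⟩ := htri Y
      have hC : Q.C.obj Y ∈ Q.colocalObjects := ⟨Y, ⟨Iso.refl _⟩⟩
      have hcounit : Q.counit.app Y = 0 := by
        have h0 : ((shiftFunctorZero T ℤ).hom.app (Q.C.obj Y) ≫ Q.counit.app Y) = 0 :=
          hY hC 0 _
        have := congrArg ((shiftFunctorZero T ℤ).inv.app (Q.C.obj Y) ≫ ·) h0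
        simpa using this
      obtain ⟨g, hg⟩ := Triangle.yoneda_exact₂ _ hw (𝟙 Y)
        (by show Q.counit.app Y ≫ 𝟙 Y = 0; rw [hcounit, zero_comp])
      exact aux_local_of_split hrefl g hg.symm
  have hiff : IsColocalizing R.localObjects ↔ IsLocalizing Q.colocalObjects := by
    constructor
    · intro hcoL
      refine ⟨hsemi'.1, ?_, hsemi'.2.1, hsemi'.2.2⟩
      rw [keyC hcoL]
      exact aux_leftOrth_fibres _
    · intro hL
      refine ⟨hsemi.1, hsemi.2.1, ?_, hsemi.2.2⟩
      rw [keyL hL]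
      exact aux_rightOrth_cofibres _
  exact ⟨hiff, fun hcoL => ⟨keyC hcoL, keyL (hiff.mp hcoL)⟩⟩

end Statements

end Paper
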